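/- arXiv:2412.01174 — 2 statements merged into one kernel-verified Lean document; each statement's English description precedes it below -/
import Mathlib

section
/- Let (Ω, 𝔽, μ) be a probability space, let X₀, X₁ : Ω → ℝ^d be integrable random vectors, and for t ∈ [0,1] let X_t := (1−t)·X₀ + t·X₁ be the linear interpolation process. Let v : [0,1] × ℝ^d → ℝ^d be a measurable velocity field such that for every t ∈ [0,1] the function ω ↦ v(t, X_t(ω)) is a version of the conditional expectation E[X₁ − X₀ | σ(X_t)] (the rectified-flow velocity field). Let Z : Ω → (ℝ → ℝ^d) be a process such that for μ-a.e. ω the path t ↦ Z(ω)(t) is differentiable on [0,1] with derivative v(t, Z(ω)(t)) (i.e., Z solves the ODE dZ_t = v(t, Z_t) dt), and assume that for every t ∈ [0,1] the law of ω ↦ Z(ω)(t) under μ equals the law of X_t under μ. Then for every convex function c : ℝ^d → ℝ such that c(X₁ − X₀) is integrable and c(v(t, X_t)) is integrable for each t with t ↦ E[c(v(t, X_t))] integrable on [0,1], the rectified coupling does not increase the transport cost: ∫ c(Z(ω)(1) − Z(ω)(0)) dμ(ω) ≤ ∫ c(X₁(ω) − X₀(ω)) dμ(ω). -/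
open MeasureTheory Set Filter Topology ProbabilityTheory
open scoped ENNReal NNReal

/-- A convex continuous function on Euclidean space has an affine-type lower bound. -/
lemma convexOn_lower_bound {d : ℕ} (c : EuclideanSpace ℝ (Fin d) → ℝ)
    (hc : ConvexOn ℝ Set.univ c) (hcont : Continuous c) :
    ∃ K : ℝ, 0 ≤ K ∧ ∀ x, -(K + K * ‖x‖) ≤ c x := by
  obtain ⟨M, hM⟩ := (isCompact_closedBall (0 : EuclideanSpace ℝ (Fin d)) 1).exists_bound_of_continuousOn hcont.continuousOn
  have hM0 : 0 ≤ M := le_trans (norm_nonneg _) (hM 0 (Metric.mem_closedBall_self zero_le_one))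
  refine ⟨M + |c 0|, by positivity, fun x => ?_⟩
  rcases le_or_gt ‖x‖ 1 with hx | hx
  · have h1 : ‖c x‖ ≤ M := hM x (by simpa [Metric.mem_closedBall, dist_eq_norm] using hx)
    have h2 : -M ≤ c x := (abs_le.1 (by simpa [Real.norm_eq_abs] using h1)).1
    nlinarith [norm_nonneg x, abs_nonneg (c 0)]
  · have hr : (0:ℝ) < ‖x‖ := lt_trans one_pos hx
    set a : ℝ := 1 / ‖x‖ with ha
    have ha0 : 0 < a := by positivity
    have ha1 : a ≤ 1 := by rw [ha]; rw [div_le_one hr]; exact hx.le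
    have hconv := hc.2 (mem_univ x) (mem_univ (0 : EuclideanSpace ℝ (Fin d))) ha0.le
      (by linarith : (0:ℝ) ≤ 1 - a) (by ring)
    have hax : ‖a • x‖ ≤ 1 := by
      rw [norm_smul, Real.norm_eq_abs, abs_of_pos ha0, ha]
      rw [one_div, inv_mul_cancel₀ hr.ne']
    have h1 : ‖c (a • x)‖ ≤ M := hM _ (by simpa [Metric.mem_closedBall, dist_eq_norm] using hax)
    have h2 : -M ≤ c (a • x) := (abs_le.1 (by simpa [Real.norm_eq_abs] using h1)).1
    have h3 : c (a • x) ≤ a * c x + (1 - a) * c 0 := by simpa using hconv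
    have h4 : -M ≤ a * c x + (1 - a) * c 0 := le_trans h2 h3
    have h5 : (1 - a) * c 0 ≤ |c 0| := by
      calc (1 - a) * c 0 ≤ (1 - a) * |c 0| := by
            apply mul_le_mul_of_nonneg_left (le_abs_self _) (by linarith)
        _ ≤ 1 * |c 0| := by apply mul_le_mul_of_nonneg_right (by linarith) (abs_nonneg _)
        _ = |c 0| := one_mul _
    -- a * c x ≥ -M - |c 0|, so c x ≥ (-M - |c 0|) / a = (-M - |c 0|) * ‖x‖
    have h6 : -M - |c 0| ≤ a * c x := by linarith
    have h7 : (-M - |c 0|) * ‖x‖ ≤ c x := by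
      have := mul_le_mul_of_nonneg_left h6 hr.le
      rw [ha] at this
      have hinv : ‖x‖ * (1 / ‖x‖ * c x) = c x := by field_simp
      nlinarith [this]
    nlinarith [norm_nonneg x, abs_nonneg (c 0), hM0]

open MeasureTheory Set Filter Topology ProbabilityTheory
open scoped ENNReal NNReal

/-- A process which is a.s. continuous on `[0,1]` and a.e.-measurable at each time admits a
jointly measurable modification (agreeing for a.e. `ω` at all times in `[0,1]`). -/
lemma exists_jointly_measurable_modification {Ω : Type*} [MeasurableSpace Ω] {E : Type*}
    [NormedAddCommGroup E] [MeasurableSpace E] [BorelSpace E] [SecondCountableTopology E]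
    (μ : Measure Ω) (Z : Ω → ℝ → E)
    (hcont : ∀ᵐ ω ∂μ, ContinuousOn (Z ω) (Set.Icc 0 1))
    (hmeas : ∀ t ∈ Set.Icc (0:ℝ) 1, AEMeasurable (fun ω => Z ω t) μ) :
    ∃ W : ℝ → Ω → E, Measurable (Function.uncurry W) ∧
      ∀ᵐ ω ∂μ, ∀ t ∈ Set.Icc (0:ℝ) 1, W t ω = Z ω t := by
  classical
  -- countable dense subset of [0,1]
  obtain ⟨D₀, hD₀c, hD₀d⟩ := TopologicalSpace.exists_countable_dense (Set.Icc (0:ℝ) 1)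
  set D : Set ℝ := (↑) '' D₀ with hD
  have hDc : D.Countable := hD₀c.image _
  have hDsub : D ⊆ Set.Icc 0 1 := by rintro q ⟨⟨q', hq'⟩, _, rfl⟩; exact hq'
  have hseq : ∀ x ∈ Set.Icc (0:ℝ) 1, ∃ u : ℕ → ℝ, (∀ n, u n ∈ D) ∧
      Tendsto u atTop (𝓝 x) := by
    intro x hx
    have hxcl : (⟨x, hx⟩ : Set.Icc (0:ℝ) 1) ∈ closure D₀ := by
      rw [hD₀d.closure_eq]; trivial
    obtain ⟨u₀, hu₀mem, hu₀⟩ := mem_closure_iff_seq_limit.1 hxcl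
    exact ⟨fun n => (u₀ n : ℝ), fun n => ⟨u₀ n, hu₀mem n, rfl⟩,
      ((continuous_subtype_val.tendsto _).comp hu₀)⟩
  -- measurable versions at dense times
  set g : ℝ → Ω → E := fun q ω =>
    if h : q ∈ Set.Icc (0:ℝ) 1 then (hmeas q h).mk _ ω else 0 with hg
  have hgmeas : ∀ q ∈ Set.Icc (0:ℝ) 1, Measurable (g q) := by
    intro q hq
    simp only [hg, dif_pos hq]
    exact (hmeas q hq).measurable_mk
  have hgae : ∀ q (hq : q ∈ Set.Icc (0:ℝ) 1), (fun ω => Z ω q) =ᵐ[μ] g q := by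
    intro q hq
    simp only [hg, dif_pos hq]
    exact (hmeas q hq).ae_eq_mk
  -- the exceptional set
  set B : Set Ω := ⋃ q ∈ D, toMeasurable μ {ω | Z ω q ≠ g q ω} with hB
  have hBmeas : MeasurableSet B :=
    MeasurableSet.biUnion hDc fun q _ => measurableSet_toMeasurable _ _
  have hBnull : μ B = 0 := by
    refine (measure_biUnion_null_iff hDc).2 fun q hq => ?_
    rw [measure_toMeasurable]
    exact hgae q (hDsub hq)
  set N : Set Ω := toMeasurable μ {ω | ¬ ContinuousOn (Z ω) (Set.Icc 0 1)} with hN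
  have hNmeas : MeasurableSet N := measurableSet_toMeasurable _ _
  have hNnull : μ N = 0 := by rw [measure_toMeasurable]; exact hcont
  set G : Set Ω := Bᶜ ∩ Nᶜ with hG
  have hGmeas : MeasurableSet G := hBmeas.compl.inter hNmeas.compl
  have hGcnull : μ Gᶜ = 0 := by
    rw [hG, compl_inter, compl_compl, compl_compl]
    exact measure_union_null hBnull hNnull
  have hGcont : ∀ ω ∈ G, ContinuousOn (Z ω) (Set.Icc 0 1) := by
    intro ω hω
    by_contra h
    exact hω.2 (subset_toMeasurable _ _ h)
  have hGagree : ∀ ω ∈ G, ∀ q ∈ D, Z ω q = g q ω := by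
    intro ω hω q hq
    by_contra h
    exact hω.1 (mem_biUnion hq (subset_toMeasurable _ _ h))
  -- clamp to [0,1]
  set clamp : ℝ → ℝ := fun t => max 0 (min 1 t) with hclamp
  have hclamp_mem : ∀ t, clamp t ∈ Set.Icc (0:ℝ) 1 :=
    fun t => ⟨le_max_left _ _, max_le zero_le_one (min_le_left _ _)⟩
  have hclamp_eq : ∀ t ∈ Set.Icc (0:ℝ) 1, clamp t = t := by
    intro t ht
    simp only [hclamp]
    rw [min_eq_right ht.2, max_eq_right ht.1]
  have hclamp_cont : Continuous clamp :=
    continuous_const.max (continuous_const.min continuous_id)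
  -- the modification
  set W : ℝ → Ω → E := fun t ω => if ω ∈ G then Z ω (clamp t) else 0 with hW
  have hWcont : ∀ ω, Continuous fun t => W t ω := by
    intro ω
    by_cases hω : ω ∈ G
    · simp only [hW, if_pos hω]
      exact (hGcont ω hω).comp_continuous hclamp_cont hclamp_mem
    · simp only [hW, if_neg hω]
      exact continuous_const
  have hWtmeas : ∀ t, Measurable (W t) := by
    intro t
    obtain ⟨u, huD, hu⟩ := hseq (clamp t) (hclamp_mem t)
    have hlim : ∀ ω, Tendsto (fun n => G.indicator (g (u n)) ω) atTop (𝓝 (W t ω)) := by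
      intro ω
      by_cases hω : ω ∈ G
      · have h1 : ∀ n, G.indicator (g (u n)) ω = Z ω (u n) := fun n => by
          rw [Set.indicator_of_mem hω, ← hGagree ω hω (u n) (huD n)]
        have h2 : Tendsto (fun n => Z ω (u n)) atTop (𝓝 (Z ω (clamp t))) := by
          have hcw : ContinuousWithinAt (Z ω) (Set.Icc 0 1) (clamp t) :=
            (hGcont ω hω) _ (hclamp_mem t)
          refine hcw.tendsto.comp ?_
          rw [tendsto_nhdsWithin_iff]
          exact ⟨hu, Eventually.of_forall fun n => hDsub (huD n)⟩
        simp only [hW, if_pos hω]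
        simpa only [h1] using h2
      · simp only [hW, if_neg hω, Set.indicator_of_notMem hω]
        exact tendsto_const_nhds
    exact measurable_of_tendsto_metrizable
      (fun n => (hgmeas (u n) (hDsub (huD n))).indicator hGmeas)
      (tendsto_pi_nhds.2 hlim)
  refine ⟨W, measurable_uncurry_of_continuous_of_measurable hWcont hWtmeas, ?_⟩
  have hG_ae : ∀ᵐ ω ∂μ, ω ∈ G := by
    rw [ae_iff]
    exact hGcnull
  filter_upwards [hG_ae] with ω hω t ht
  simp only [hW, if_pos hω, hclamp_eq t ht]

open MeasureTheory Set Filter Topology ProbabilityTheory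
open scoped ENNReal NNReal

/-- Conditional Jensen inequality via regular conditional distributions: if `V` is a version of
`E[Y | σ(X)]`, then `∫ ‖V‖ ≤ ∫ ‖Y‖` and `∫ c ∘ V ≤ ∫ c ∘ Y` for convex `c`. -/
lemma condexp_jensen {Ω : Type*} [m0 : MeasurableSpace Ω] (μ : Measure Ω) [IsProbabilityMeasure μ]
    {d : ℕ} (Y : Ω → EuclideanSpace ℝ (Fin d)) (hYm : Measurable Y) (hYi : Integrable Y μ)
    (X : Ω → EuclideanSpace ℝ (Fin d)) (hXm : Measurable X)
    (c : EuclideanSpace ℝ (Fin d) → ℝ) (hc : ConvexOn ℝ Set.univ c) (hccont : Continuous c)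
    (hcYi : Integrable (fun ω => c (Y ω)) μ)
    (V : Ω → EuclideanSpace ℝ (Fin d))
    (hV : V =ᵐ[μ] μ[Y | MeasurableSpace.comap X inferInstance])
    (hVci : Integrable (fun ω => c (V ω)) μ) :
    Integrable V μ ∧ (∫ ω, ‖V ω‖ ∂μ ≤ ∫ ω, ‖Y ω‖ ∂μ) ∧
      (∫ ω, c (V ω) ∂μ ≤ ∫ ω, c (Y ω) ∂μ) := by
  have hm : MeasurableSpace.comap X inferInstance ≤ m0 := hXm.comap_le
  haveI : SigmaFinite (μ.trim hm) := inferInstance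
  set κ := condDistrib Y X μ with hκ
  have hVint : Integrable V μ := integrable_condExp.congr hV.symm
  -- identification of the conditional expectations via condDistrib
  have h1 : μ[Y | MeasurableSpace.comap X inferInstance] =ᵐ[μ] fun a => ∫ y, y ∂κ (X a) :=
    condExp_ae_eq_integral_condDistrib' hXm hYi
  have h2 : μ[(fun a => c (Y a)) | MeasurableSpace.comap X inferInstance] =ᵐ[μ] fun a => ∫ y, c y ∂κ (X a) :=
    condExp_ae_eq_integral_condDistrib hXm hYm.aemeasurable hccont.stronglyMeasurable hcYi
  have h7 : μ[(fun a => ‖Y a‖) | MeasurableSpace.comap X inferInstance] =ᵐ[μ] fun a => ∫ y, ‖y‖ ∂κ (X a) :=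
    condExp_ae_eq_integral_condDistrib hXm hYm.aemeasurable
      continuous_norm.stronglyMeasurable hYi.norm
  -- integrability with respect to the kernel
  have hXYm : AEMeasurable (fun a => (X a, Y a)) μ := (hXm.prodMk hYm).aemeasurable
  have hsnd : Integrable (fun p : EuclideanSpace ℝ (Fin d) × EuclideanSpace ℝ (Fin d) => p.2)
      (μ.map fun a => (X a, Y a)) := by
    rw [integrable_map_measure measurable_snd.aestronglyMeasurable hXYm]
    exact hYi
  have hcsnd : Integrable (fun p : EuclideanSpace ℝ (Fin d) × EuclideanSpace ℝ (Fin d) => c p.2)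
      (μ.map fun a => (X a, Y a)) := by
    have hgm : Measurable (fun p : EuclideanSpace ℝ (Fin d) × EuclideanSpace ℝ (Fin d) => c p.2) :=
      hccont.measurable.comp measurable_snd
    rw [integrable_map_measure hgm.aestronglyMeasurable hXYm]
    exact hcYi
  have h3 : ∀ᵐ a ∂μ, Integrable (fun y => y) (κ (X a)) :=
    hsnd.condDistrib_ae hXm.aemeasurable hYm.aemeasurable
  have h4 : ∀ᵐ a ∂μ, Integrable (fun y => c y) (κ (X a)) :=
    hcsnd.condDistrib_ae hXm.aemeasurable hYm.aemeasurable
  -- pointwise Jensen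
  have h5 : ∀ᵐ a ∂μ, c (∫ y, y ∂κ (X a)) ≤ ∫ y, c y ∂κ (X a) := by
    filter_upwards [h3, h4] with a h3a h4a
    haveI : IsProbabilityMeasure (κ (X a)) := IsMarkovKernel.isProbabilityMeasure _
    exact hc.map_integral_le hccont.continuousOn isClosed_univ
      (Eventually.of_forall fun _ => mem_univ _) h3a h4a
  have h6 : Integrable (fun a => ∫ y, c y ∂κ (X a)) μ :=
    hcsnd.integral_condDistrib hXm.aemeasurable hYm.aemeasurable
  have h8 : Integrable (fun a => ∫ y, ‖y‖ ∂κ (X a)) μ :=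
    hsnd.integral_norm_condDistrib hXm.aemeasurable hYm.aemeasurable
  refine ⟨hVint, ?_, ?_⟩
  · -- norm bound
    have hle : ∀ᵐ a ∂μ, ‖V a‖ ≤ ∫ y, ‖y‖ ∂κ (X a) := by
      filter_upwards [hV, h1] with a hVa h1a
      rw [hVa, h1a]
      exact norm_integral_le_integral_norm _
    calc ∫ ω, ‖V ω‖ ∂μ ≤ ∫ a, ∫ y, ‖y‖ ∂κ (X a) ∂μ := integral_mono_ae hVint.norm h8 hle
      _ = ∫ a, (μ[(fun a => ‖Y a‖) | MeasurableSpace.comap X inferInstance]) a ∂μ := integral_congr_ae h7.symm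
      _ = ∫ ω, ‖Y ω‖ ∂μ := integral_condExp hm
  · -- Jensen bound
    have hle : ∀ᵐ a ∂μ, c (V a) ≤ ∫ y, c y ∂κ (X a) := by
      filter_upwards [hV, h1, h5] with a hVa h1a h5a
      rw [hVa, h1a]
      exact h5a
    calc ∫ ω, c (V ω) ∂μ ≤ ∫ a, ∫ y, c y ∂κ (X a) ∂μ := integral_mono_ae hVci h6 hle
      _ = ∫ a, (μ[(fun a => c (Y a)) | MeasurableSpace.comap X inferInstance]) a ∂μ := integral_congr_ae h2.symm
      _ = ∫ ω, c (Y ω) ∂μ := integral_condExp hm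

/-- Rectified flow does not increase convex transport costs. Let `X t = (1-t)•X₀ + t•X₁`
be the linear interpolation of integrable random vectors `X₀, X₁`, let `v` be a measurable
velocity field such that `v t (X t ·)` is a version of the conditional expectation
`E[X₁ - X₀ | σ(X t)]` for every `t ∈ [0,1]`, and let `Z` be a process solving the ODE
`dZ_t = v(t, Z_t) dt` on `[0,1]` almost surely, whose time-`t` marginal law agrees with
that of `X t` for every `t ∈ [0,1]`. Then for every convex cost `c` (with the stated
integrability), `∫ c (Z 1 - Z 0) dμ ≤ ∫ c (X₁ - X₀) dμ`. -/
theorem rectified_flow_does_not_increase_convex_cost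
    {d : ℕ} {Ω : Type*} [inst𝔽 : MeasurableSpace Ω]
    (μ : Measure Ω) [IsProbabilityMeasure μ]
    (X₀ X₁ : Ω → EuclideanSpace ℝ (Fin d))
    (hX₀m : Measurable X₀) (hX₁m : Measurable X₁)
    (hX₀i : Integrable X₀ μ) (hX₁i : Integrable X₁ μ)
    (X : ℝ → Ω → EuclideanSpace ℝ (Fin d))
    (hX : ∀ t, X t = fun ω => (1 - t) • X₀ ω + t • X₁ ω)
    (v : ℝ → EuclideanSpace ℝ (Fin d) → EuclideanSpace ℝ (Fin d))
    (hvmeas : Measurable (Function.uncurry v))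
    (hv : ∀ t ∈ Set.Icc (0 : ℝ) 1,
      (fun ω => v t (X t ω)) =ᵐ[μ]
        μ[fun ω => X₁ ω - X₀ ω | MeasurableSpace.comap (X t) inferInstance])
    (Z : Ω → ℝ → EuclideanSpace ℝ (Fin d))
    (hZode : ∀ᵐ ω ∂μ, ∀ t ∈ Set.Icc (0 : ℝ) 1,
      HasDerivWithinAt (Z ω) (v t (Z ω t)) (Set.Icc 0 1) t)
    (hZlaw : ∀ t ∈ Set.Icc (0 : ℝ) 1,
      Measure.map (fun ω => Z ω t) μ = Measure.map (X t) μ)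
    (c : EuclideanSpace ℝ (Fin d) → ℝ)
    (hc : ConvexOn ℝ Set.univ c)
    (hcXi : Integrable (fun ω => c (X₁ ω - X₀ ω)) μ)
    (hcvi : ∀ t ∈ Set.Icc (0 : ℝ) 1, Integrable (fun ω => c (v t (X t ω))) μ)
    (hcvti : IntegrableOn (fun t => ∫ ω, c (v t (X t ω)) ∂μ) (Set.Icc 0 1) volume) :
    ∫ ω, c (Z ω 1 - Z ω 0) ∂μ ≤ ∫ ω, c (X₁ ω - X₀ ω) ∂μ := by
  classical
  have hYm : Measurable (fun ω => X₁ ω - X₀ ω) := hX₁m.sub hX₀m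
  have hYi : Integrable (fun ω => X₁ ω - X₀ ω) μ := hX₁i.sub hX₀i
  have hccont : Continuous c := continuousOn_univ.1 (hc.continuousOn isOpen_univ)
  obtain ⟨K, hK0, hKb⟩ := convexOn_lower_bound c hc hccont
  have habs : ∀ x, |c x| ≤ c x + (2 * K + 2 * K * ‖x‖) := by
    intro x
    have h1 := hKb x
    rcases le_or_gt 0 (c x) with h | h
    · rw [abs_of_nonneg h]; nlinarith [norm_nonneg x]
    · rw [abs_of_neg h]; nlinarith [norm_nonneg x]
  have hXtm : ∀ t, Measurable (X t) := by
    intro t; rw [hX]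
    exact (hX₀m.const_smul ((1:ℝ) - t)).add (hX₁m.const_smul t)
  have hXti : ∀ t, Integrable (X t) μ := by
    intro t; rw [hX]
    exact (hX₀i.smul ((1:ℝ) - t)).add (hX₁i.smul t)
  have hvtm : ∀ t, Measurable (v t) := fun t =>
    hvmeas.comp (measurable_const.prodMk measurable_id)
  -- key conditional Jensen facts at each time
  have key : ∀ t ∈ Set.Icc (0:ℝ) 1, Integrable (fun ω => v t (X t ω)) μ ∧
      (∫ ω, ‖v t (X t ω)‖ ∂μ ≤ ∫ ω, ‖X₁ ω - X₀ ω‖ ∂μ) ∧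
      (∫ ω, c (v t (X t ω)) ∂μ ≤ ∫ ω, c (X₁ ω - X₀ ω) ∂μ) := fun t ht =>
    condexp_jensen μ _ hYm hYi (X t) (hXtm t) c hc hccont hcXi _ (hv t ht) (hcvi t ht)
  -- construct a jointly measurable modification W of Z
  have hZcont : ∀ᵐ ω ∂μ, ContinuousOn (Z ω) (Set.Icc 0 1) :=
    hZode.mono fun ω h t ht => (h t ht).continuousWithinAt
  have hZaem : ∀ t ∈ Set.Icc (0:ℝ) 1, AEMeasurable (fun ω => Z ω t) μ := by
    intro t ht
    by_contra h
    have h0 : Measure.map (fun ω => Z ω t) μ = 0 := Measure.map_of_not_aemeasurable h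
    have h1 : (Measure.map (X t) μ) Set.univ = 1 := by
      rw [Measure.map_apply (hXtm t) MeasurableSet.univ]; simp
    rw [← hZlaw t ht, h0] at h1
    simp at h1
  obtain ⟨W, hWmeas, hWZ⟩ := exists_jointly_measurable_modification μ Z hZcont hZaem
  have hWtm : ∀ t, Measurable (W t) := fun t =>
    hWmeas.comp (measurable_prodMk_left)
  have hWlaw : ∀ t ∈ Set.Icc (0:ℝ) 1, Measure.map (W t) μ = Measure.map (X t) μ := by
    intro t ht
    rw [← hZlaw t ht]
    exact Measure.map_congr (hWZ.mono fun ω hω => hω t ht)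
  -- transfer of integrals between W and X marginals
  have hmap : ∀ t ∈ Set.Icc (0:ℝ) 1, ∀ (φ : EuclideanSpace ℝ (Fin d) → ℝ), Measurable φ →
      ∫ ω, φ (W t ω) ∂μ = ∫ ω, φ (X t ω) ∂μ := by
    intro t ht φ hφ
    rw [← integral_map (hWtm t).aemeasurable hφ.aestronglyMeasurable, hWlaw t ht,
      integral_map (hXtm t).aemeasurable hφ.aestronglyMeasurable]
  have hmapl : ∀ t ∈ Set.Icc (0:ℝ) 1, ∀ (φ : EuclideanSpace ℝ (Fin d) → ℝ≥0∞), Measurable φ →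
      ∫⁻ ω, φ (W t ω) ∂μ = ∫⁻ ω, φ (X t ω) ∂μ := by
    intro t ht φ hφ
    rw [← lintegral_map hφ (hWtm t), hWlaw t ht, lintegral_map hφ (hXtm t)]
  -- the probability measure on time
  set ν : Measure ℝ := volume.restrict (Set.Icc 0 1) with hν
  haveI : IsProbabilityMeasure ν := by
    constructor
    rw [hν, Measure.restrict_apply_univ, Real.volume_Icc]
    norm_num
  have htIcc : ∀ᵐ t ∂ν, t ∈ Set.Icc (0:ℝ) 1 := ae_restrict_mem measurableSet_Icc
  -- joint measurability and integrability on the product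
  have hFm : Measurable (fun p : ℝ × Ω => v p.1 (W p.1 p.2)) :=
    hvmeas.comp (measurable_fst.prodMk hWmeas)
  have hcFm : Measurable (fun p : ℝ × Ω => c (v p.1 (W p.1 p.2))) := hccont.measurable.comp hFm
  have hFint : Integrable (fun p : ℝ × Ω => v p.1 (W p.1 p.2)) (ν.prod μ) := by
    refine ⟨hFm.aestronglyMeasurable, ?_⟩
    rw [HasFiniteIntegral]
    calc ∫⁻ p, ‖v p.1 (W p.1 p.2)‖₊ ∂(ν.prod μ)
        = ∫⁻ t, ∫⁻ ω, ‖v t (W t ω)‖₊ ∂μ ∂ν :=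
          lintegral_prod _ hFm.enorm.aemeasurable
      _ ≤ ∫⁻ t, ∫⁻ ω, ‖X₁ ω - X₀ ω‖₊ ∂μ ∂ν := by
          refine lintegral_mono_ae (htIcc.mono fun t ht => ?_)
          have hφ : Measurable fun x => (‖v t x‖₊ : ℝ≥0∞) := (hvtm t).enorm
          rw [hmapl t ht _ hφ]; simp only [← enorm_eq_nnnorm]
          rw [← ofReal_integral_norm_eq_lintegral_enorm (key t ht).1,
            ← ofReal_integral_norm_eq_lintegral_enorm hYi]
          exact ENNReal.ofReal_le_ofReal (key t ht).2.1
      _ = ∫⁻ ω, ‖X₁ ω - X₀ ω‖₊ ∂μ := by simp [lintegral_const, measure_univ]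
      _ < ∞ := hYi.2
  have hcFint : Integrable (fun p : ℝ × Ω => c (v p.1 (W p.1 p.2))) (ν.prod μ) := by
    refine ⟨hcFm.aestronglyMeasurable, ?_⟩
    rw [HasFiniteIntegral]
    set B : ℝ := 2 * K + 2 * K * ∫ ω, ‖X₁ ω - X₀ ω‖ ∂μ with hB
    have hgm : Measurable (fun p : ℝ × Ω =>
        ENNReal.ofReal (c (v p.1 (W p.1 p.2)) + (2 * K + 2 * K * ‖v p.1 (W p.1 p.2)‖))) :=
      (hcFm.add ((measurable_const.add ((measurable_const.mul hFm.norm))))).ennreal_ofReal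
    calc ∫⁻ p, ‖c (v p.1 (W p.1 p.2))‖₊ ∂(ν.prod μ)
        ≤ ∫⁻ p, ENNReal.ofReal
            (c (v p.1 (W p.1 p.2)) + (2 * K + 2 * K * ‖v p.1 (W p.1 p.2)‖)) ∂(ν.prod μ) := by
          refine lintegral_mono fun p => ?_
          rw [← enorm_eq_nnnorm, Real.enorm_eq_ofReal_abs]
          exact ENNReal.ofReal_le_ofReal (habs _)
      _ = ∫⁻ t, ∫⁻ ω, ENNReal.ofReal
            (c (v t (W t ω)) + (2 * K + 2 * K * ‖v t (W t ω)‖)) ∂μ ∂ν :=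
          lintegral_prod _ hgm.aemeasurable
      _ ≤ ∫⁻ t, (ENNReal.ofReal |∫ ω, c (v t (X t ω)) ∂μ| + ENNReal.ofReal B) ∂ν := by
          refine lintegral_mono_ae (htIcc.mono fun t ht => ?_)
          have hφ : Measurable (fun x =>
              ENNReal.ofReal (c (v t x) + (2 * K + 2 * K * ‖v t x‖))) :=
            ((hccont.measurable.comp (hvtm t)).add
              (measurable_const.add (measurable_const.mul (hvtm t).norm))).ennreal_ofReal
          rw [hmapl t ht _ hφ]
          have hrest : Integrable (fun ω => 2 * K + 2 * K * ‖v t (X t ω)‖) μ :=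
            (integrable_const _).add ((key t ht).1.norm.const_mul _)
          have hint : Integrable
              (fun ω => c (v t (X t ω)) + (2 * K + 2 * K * ‖v t (X t ω)‖)) μ :=
            (hcvi t ht).add hrest
          have hnn : 0 ≤ᵐ[μ] fun ω => c (v t (X t ω)) + (2 * K + 2 * K * ‖v t (X t ω)‖) :=
            Eventually.of_forall fun ω => by
              simp only [Pi.zero_apply]
              nlinarith [hKb (v t (X t ω)), norm_nonneg (v t (X t ω))]
          rw [← ofReal_integral_eq_lintegral_ofReal hint hnn,
            integral_add (hcvi t ht) hrest]
          refine le_trans (ENNReal.ofReal_add_le) (add_le_add ?_ ?_)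
          · exact ENNReal.ofReal_le_ofReal (le_abs_self _)
          · refine ENNReal.ofReal_le_ofReal ?_
            rw [integral_add (integrable_const _) ((key t ht).1.norm.const_mul _),
              integral_const, integral_const_mul, hB]
            have h1 : ∫ ω, ‖v t (X t ω)‖ ∂μ ≤ ∫ ω, ‖X₁ ω - X₀ ω‖ ∂μ := (key t ht).2.1
            have h2 : μ.real Set.univ = 1 := by simp
            rw [h2, smul_eq_mul, one_mul]
            nlinarith
      _ = (∫⁻ t, ENNReal.ofReal |∫ ω, c (v t (X t ω)) ∂μ| ∂ν) + ENNReal.ofReal B * ν Set.univ :=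
          by rw [lintegral_add_right _ measurable_const, lintegral_const]
      _ < ∞ := by
          refine ENNReal.add_lt_top.2 ⟨?_, ?_⟩
          · have := hcvti.2
            rw [HasFiniteIntegral] at this
            simpa [Real.enorm_eq_ofReal_abs] using this
          · rw [measure_univ, mul_one]
            exact ENNReal.ofReal_lt_top
  have hsec : ∀ᵐ ω ∂μ, Integrable (fun t => v t (W t ω)) ν := hFint.prod_left_ae
  have hsecc : ∀ᵐ ω ∂μ, Integrable (fun t => c (v t (W t ω))) ν := hcFint.prod_left_ae
  -- pathwise FTC + Jensen
  have hae : ∀ᵐ ω ∂μ, c (Z ω 1 - Z ω 0) ≤ ∫ t, c (v t (W t ω)) ∂ν := by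
    filter_upwards [hZode, hWZ, hsec, hsecc] with ω hode hWZω hsecω hseccω
    have hconti : ContinuousOn (Z ω) (Set.Icc 0 1) := fun t ht => (hode t ht).continuousWithinAt
    have hsecω' : IntegrableOn (fun t => v t (W t ω)) (Set.Icc 0 1) volume := by
      rw [IntegrableOn, ← hν]; exact hsecω
    have hint : IntegrableOn (fun t => v t (Z ω t)) (Set.Icc 0 1) volume :=
      hsecω'.congr_fun (fun t ht => by simp only [hWZω t ht]) measurableSet_Icc
    have hODE' : ∀ s ∈ Set.Ioo (0:ℝ) 1, HasDerivWithinAt (Z ω) (v s (Z ω s)) (Set.Ioi s) s :=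
      fun s hs => (hode s (Set.Ioo_subset_Icc_self hs)).mono_of_mem_nhdsWithin
        (Icc_mem_nhdsGT_of_mem ⟨hs.1.le, hs.2⟩)
    have hftc : ∫ t in (0:ℝ)..1, v t (Z ω t) = Z ω 1 - Z ω 0 :=
      intervalIntegral.integral_eq_sub_of_hasDeriv_right_of_le zero_le_one hconti hODE'
        ((intervalIntegrable_iff_integrableOn_Icc_of_le zero_le_one).2 hint)
    have hνint : ∫ t, v t (W t ω) ∂ν = Z ω 1 - Z ω 0 := by
      have h1 : ∫ t, v t (W t ω) ∂ν = ∫ t in Set.Icc (0:ℝ) 1, v t (Z ω t) := by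
        rw [hν]
        exact integral_congr_ae ((ae_restrict_mem measurableSet_Icc).mono fun t ht => by
          simp only [hWZω t ht])
      rw [h1, MeasureTheory.integral_Icc_eq_integral_Ioc,
        ← intervalIntegral.integral_of_le zero_le_one, hftc]
    have hJ := hc.map_integral_le hccont.continuousOn isClosed_univ
      (Eventually.of_forall fun _ => Set.mem_univ _) hsecω hseccω
    rw [hνint] at hJ
    exact hJ
  -- integrability of both sides
  have hΦint : Integrable (fun ω => ∫ t, c (v t (W t ω)) ∂ν) μ := hcFint.integral_prod_right
  have hLHSint : Integrable (fun ω => c (Z ω 1 - Z ω 0)) μ := by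
    have hZd_ae : (fun ω => W 1 ω - W 0 ω) =ᵐ[μ] fun ω => Z ω 1 - Z ω 0 :=
      hWZ.mono fun ω hω => by
        simp only [hω 1 (Set.mem_Icc.2 ⟨zero_le_one, le_refl 1⟩),
          hω 0 (Set.mem_Icc.2 ⟨le_refl 0, zero_le_one⟩)]
    have hWd_int : ∀ t ∈ Set.Icc (0:ℝ) 1, Integrable (W t) μ := by
      intro t ht
      refine ⟨(hWtm t).aestronglyMeasurable, ?_⟩
      rw [HasFiniteIntegral, hmapl t ht _ measurable_enorm]
      exact (hXti t).2
    have hZd_int : Integrable (fun ω => Z ω 1 - Z ω 0) μ :=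
      ((hWd_int 1 (Set.mem_Icc.2 ⟨zero_le_one, le_refl 1⟩)).sub
        (hWd_int 0 (Set.mem_Icc.2 ⟨le_refl 0, zero_le_one⟩))).congr hZd_ae
    have hcm : Measurable (fun ω => c (W 1 ω - W 0 ω)) :=
      hccont.measurable.comp ((hWtm 1).sub (hWtm 0))
    have hmeas' : AEStronglyMeasurable (fun ω => c (Z ω 1 - Z ω 0)) μ :=
      (hcm.aestronglyMeasurable).congr (hZd_ae.mono fun ω hω => congrArg c hω)
    refine Integrable.mono' (g := fun ω => (∫ t, c (v t (W t ω)) ∂ν) + (2 * K + 2 * K * ‖Z ω 1 - Z ω 0‖))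
      (hΦint.add ((integrable_const _).add (hZd_int.norm.const_mul _))) hmeas' ?_
    filter_upwards [hae] with ω hω
    rw [Real.norm_eq_abs]
    exact le_trans (habs _) (by linarith)
  -- conclusion
  calc ∫ ω, c (Z ω 1 - Z ω 0) ∂μ ≤ ∫ ω, ∫ t, c (v t (W t ω)) ∂ν ∂μ :=
        integral_mono_ae hLHSint hΦint hae
    _ = ∫ t, ∫ ω, c (v t (W t ω)) ∂μ ∂ν := (integral_integral_swap hcFint).symm
    _ ≤ ∫ t, ∫ ω, c (X₁ ω - X₀ ω) ∂μ ∂ν := by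
        refine integral_mono_ae hcFint.integral_prod_left (integrable_const _) ?_
        filter_upwards [htIcc] with t ht
        have hφ : Measurable (fun x => c (v t x)) := hccont.measurable.comp (hvtm t)
        rw [hmap t ht _ hφ]
        exact (key t ht).2.2
    _ = ∫ ω, c (X₁ ω - X₀ ω) ∂μ := by simp
end

section
/- Let (Ω, 𝔽, μ) be a probability space, let X₀, X₁ : Ω → ℝ^d be integrable random vectors, and for t ∈ [0,1] let X_t := (1−t)·X₀ + t·X₁. Let v : [0,1] × ℝ^d → ℝ^d be measurable such that for every t ∈ [0,1], ω ↦ v(t, X_t(ω)) is a version of the conditional expectation E[X₁ − X₀ | σ(X_t)]. Then for every continuously differentiable function φ : ℝ^d → ℝ that is bounded with bounded gradient, the function t ↦ ∫ φ(X_t(ω)) dμ(ω) is differentiable on (0,1) and its derivative at t equals ∫ ⟨∇φ(X_t(ω)), v(t, X_t(ω))⟩ dμ(ω). In other words, the marginal laws of the interpolation process X_t solve the continuity equation weakly with the rectified-flow velocity field v. -/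
open MeasureTheory

lemma condexp_clm_comm {Ω : Type*} {m m0 : MeasurableSpace Ω} (hm : m ≤ m0)
    (μ : @Measure Ω m0) [IsFiniteMeasure μ]
    {E F : Type*} [NormedAddCommGroup E] [NormedSpace ℝ E] [CompleteSpace E]
    [NormedAddCommGroup F] [NormedSpace ℝ F] [CompleteSpace F]
    (T : E →L[ℝ] F) {f : Ω → E} (hf : Integrable f μ) :
    (fun ω => T ((μ[f | m]) ω)) =ᵐ[μ] μ[fun ω => T (f ω) | m] := by
  refine ae_eq_condExp_of_forall_setIntegral_eq hm (T.integrable_comp hf)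
    (fun s _ _ => (T.integrable_comp integrable_condExp).integrableOn)
    (fun s hs hμs => ?_)
    (StronglyMeasurable.aestronglyMeasurable (T.continuous.comp_stronglyMeasurable stronglyMeasurable_condExp))
  rw [T.integral_comp_comm integrable_condExp.integrableOn,
    setIntegral_condExp hm hf hs, ← T.integral_comp_comm hf.integrableOn]

lemma integral_mul_condexp' {Ω : Type*} {m m0 : MeasurableSpace Ω} (hm : m ≤ m0)
    (μ : @Measure Ω m0) [IsFiniteMeasure μ] {f g : Ω → ℝ}
    (hf : StronglyMeasurable[m] f) (hfg : Integrable (f * g) μ) (hg : Integrable g μ) :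
    ∫ ω, f ω * g ω ∂μ = ∫ ω, f ω * (μ[g | m]) ω ∂μ := by
  calc ∫ ω, f ω * g ω ∂μ = ∫ ω, (f * g) ω ∂μ := rfl
    _ = ∫ ω, (μ[f * g | m]) ω ∂μ := (integral_condExp hm).symm
    _ = ∫ ω, (f * μ[g | m]) ω ∂μ := integral_congr_ae (condExp_mul_of_stronglyMeasurable_left hf hfg hg)
    _ = ∫ ω, f ω * (μ[g | m]) ω ∂μ := rfl

lemma euclid_abs_le_norm {d : ℕ} (x : EuclideanSpace ℝ (Fin d)) (i : Fin d) :
    |x i| ≤ ‖x‖ := by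
  rw [EuclideanSpace.norm_eq, ← Real.sqrt_sq_eq_abs]
  refine Real.sqrt_le_sqrt ?_
  have h := Finset.single_le_sum (f := fun j => ‖x j‖ ^ 2)
    (fun j _ => sq_nonneg _) (Finset.mem_univ i)
  simpa [Real.norm_eq_abs, sq_abs] using h

/-- The marginal laws of the linear interpolation `X t = (1-t)•X₀ + t•X₁` solve the
continuity equation weakly with the rectified-flow velocity field `v`, where
`v t (X t ·)` is a version of `E[X₁ - X₀ | σ(X t)]`: for every `C¹` test function `φ`
that is bounded with bounded gradient and every `t ∈ (0,1)`, the map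
`s ↦ ∫ φ (X s ω) dμ(ω)` is differentiable at `t` with derivative
`∫ ⟨∇φ (X t ω), v t (X t ω)⟩ dμ(ω)`. -/
theorem interpolation_marginals_solve_continuity_equation
    {d : ℕ} {Ω : Type*} [inst𝔽 : MeasurableSpace Ω]
    (μ : Measure Ω) [IsProbabilityMeasure μ]
    (X₀ X₁ : Ω → EuclideanSpace ℝ (Fin d))
    (hX₀m : Measurable X₀) (hX₁m : Measurable X₁)
    (hX₀i : Integrable X₀ μ) (hX₁i : Integrable X₁ μ)
    (X : ℝ → Ω → EuclideanSpace ℝ (Fin d))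
    (hX : ∀ t, X t = fun ω => (1 - t) • X₀ ω + t • X₁ ω)
    (v : ℝ → EuclideanSpace ℝ (Fin d) → EuclideanSpace ℝ (Fin d))
    (hvmeas : Measurable (Function.uncurry v))
    (hv : ∀ t ∈ Set.Icc (0 : ℝ) 1,
      (fun ω => v t (X t ω)) =ᵐ[μ]
        μ[fun ω => X₁ ω - X₀ ω | MeasurableSpace.comap (X t) inferInstance])
    (φ : EuclideanSpace ℝ (Fin d) → ℝ)
    (hφ : ContDiff ℝ 1 φ)
    (hφbdd : ∃ C : ℝ, ∀ x, |φ x| ≤ C)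
    (hgradbdd : ∃ C : ℝ, ∀ x, ‖gradient φ x‖ ≤ C) :
    ∀ t ∈ Set.Ioo (0 : ℝ) 1,
      HasDerivAt (fun s => ∫ ω, φ (X s ω) ∂μ)
        (∫ ω, @inner ℝ _ _ (gradient φ (X t ω)) (v t (X t ω)) ∂μ) t := by
  intro t ht
  set Y : Ω → EuclideanSpace ℝ (Fin d) := fun ω => X₁ ω - X₀ ω with hY
  have hYm : Measurable Y := hX₁m.sub hX₀m
  have hYi : Integrable Y μ := hX₁i.sub hX₀i
  have hXm : ∀ s, Measurable (X s) := by
    intro s; rw [hX s]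
    exact (hX₀m.const_smul (1 - s)).add (hX₁m.const_smul s)
  have hgradcont : Continuous (gradient φ) := by
    have h : gradient φ = fun x =>
        (InnerProductSpace.toDual ℝ (EuclideanSpace ℝ (Fin d))).symm (fderiv ℝ φ x) := by
      funext x; rfl
    rw [h]
    exact (InnerProductSpace.toDual ℝ (EuclideanSpace ℝ (Fin d))).symm.continuous.comp (hφ.continuous_fderiv one_ne_zero)
  have hgradinner : ∀ x y, (fderiv ℝ φ x) y = @inner ℝ _ _ (gradient φ x) y := by
    intro x y
    show _ = @inner ℝ _ _ ((InnerProductSpace.toDual ℝ (EuclideanSpace ℝ (Fin d))).symm (fderiv ℝ φ x)) y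
    rw [← InnerProductSpace.toDual_apply_apply, LinearIsometryEquiv.apply_symm_apply]
  obtain ⟨Cφ, hCφ⟩ := hφbdd
  obtain ⟨C, hC⟩ := hgradbdd
  have hderiv : ∀ ω, ∀ s : ℝ, HasDerivAt (fun s => φ (X s ω))
      (@inner ℝ _ _ (gradient φ (X s ω)) (Y ω)) s := by
    intro ω s
    have hpath : HasDerivAt (fun s : ℝ => X s ω) (Y ω) s := by
      have heq : (fun s : ℝ => X s ω) = fun s : ℝ => X₀ ω + s • (Y ω) := by
        funext u; rw [hX u]; simp [hY, smul_sub, sub_smul]; abel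
      rw [heq]
      simpa using ((hasDerivAt_id s).smul_const (Y ω)).const_add (X₀ ω)
    have h := ((hφ.differentiable one_ne_zero (X s ω)).hasFDerivAt).comp_hasDerivAt s hpath
    rwa [hgradinner] at h
  have key := hasDerivAt_integral_of_dominated_loc_of_deriv_le (μ := μ)
    (F := fun s ω => φ (X s ω))
    (F' := fun s ω => @inner ℝ _ _ (gradient φ (X s ω)) (Y ω)) (x₀ := t)
    (bound := fun ω => C * ‖Y ω‖) (Metric.ball_mem_nhds t one_pos)
    (Filter.Eventually.of_forall fun s =>
      (hφ.continuous.measurable.comp (hXm s)).aestronglyMeasurable)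
    ((integrable_const Cφ).mono' (hφ.continuous.measurable.comp (hXm t)).aestronglyMeasurable
      (Filter.Eventually.of_forall fun ω => by
        simpa using hCφ (X t ω)))
    (((hgradcont.measurable.comp (hXm t)).inner hYm).aestronglyMeasurable)
    (Filter.Eventually.of_forall fun ω s _ => by
      calc ‖@inner ℝ _ _ (gradient φ (X s ω)) (Y ω)‖
          ≤ ‖gradient φ (X s ω)‖ * ‖Y ω‖ := norm_inner_le_norm _ _
        _ ≤ C * ‖Y ω‖ := mul_le_mul_of_nonneg_right (hC _) (norm_nonneg _))
    (hYi.norm.const_mul C)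
    (Filter.Eventually.of_forall fun ω s _ => hderiv ω s)
  convert key.2 using 1
  · rfl
  · rfl
  -- identify the two integrals via the conditional expectation
  set m : MeasurableSpace Ω := MeasurableSpace.comap (X t) inferInstance with hm_def
  have hm : m ≤ inst𝔽 := (hXm t).comap_le
  have hXtm' : Measurable[m] (X t) := fun s hs => ⟨s, hs, rfl⟩
  set g : Ω → EuclideanSpace ℝ (Fin d) := fun ω => gradient φ (X t ω) with hg
  have hgsm : StronglyMeasurable[m] g :=
    (hgradcont.measurable.comp hXtm').stronglyMeasurable
  have hgim : Measurable[inst𝔽] g := hgradcont.measurable.comp (hXm t)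
  set W : Ω → EuclideanSpace ℝ (Fin d) := μ[fun ω => X₁ ω - X₀ ω | m] with hW
  have hWi : Integrable W μ := integrable_condExp
  have hWm : AEStronglyMeasurable[inst𝔽] W μ := hWi.aestronglyMeasurable
  have hvt : (fun ω => v t (X t ω)) =ᵐ[μ] W := hv t ⟨ht.1.le, ht.2.le⟩
  -- integrability of coordinate products
  have hmulInt : ∀ (i : Fin d) (h : Ω → EuclideanSpace ℝ (Fin d)), Integrable h μ →
      AEStronglyMeasurable[inst𝔽] (fun ω => g ω i * h ω i) μ →
      Integrable (fun ω => g ω i * h ω i) μ := by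
    intro i h hint hmeas
    refine (hint.norm.const_mul C).mono' hmeas (Filter.Eventually.of_forall fun ω => ?_)
    simp only [norm_mul, Real.norm_eq_abs]
    have hC0 : (0 : ℝ) ≤ C := (norm_nonneg _).trans (hC 0)
    exact mul_le_mul ((euclid_abs_le_norm (g ω) i).trans (hC _))
      (euclid_abs_le_norm (h ω) i) (abs_nonneg _) hC0
  have hWcoordm : ∀ i : Fin d, AEStronglyMeasurable[inst𝔽] (fun ω => g ω i * W ω i) μ := by
    intro i
    exact (((EuclideanSpace.proj (𝕜 := ℝ) i).continuous.measurable.comp hgim).aestronglyMeasurable).mul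
      ((EuclideanSpace.proj (𝕜 := ℝ) i).continuous.comp_aestronglyMeasurable hWm)
  have hwInt : ∀ i : Fin d, Integrable (fun ω => g ω i * W ω i) μ := fun i =>
    hmulInt i W hWi (hWcoordm i)
  have hvInt : ∀ i : Fin d, Integrable (fun ω => g ω i * (v t (X t ω)) i) μ := by
    intro i
    refine (hwInt i).congr ?_
    filter_upwards [hvt] with ω hω
    rw [hω]
  have hyInt : ∀ i : Fin d, Integrable (fun ω => g ω i * Y ω i) μ := by
    intro i
    refine hmulInt i Y hYi ?_
    exact (((EuclideanSpace.proj (𝕜 := ℝ) i).continuous.measurable.comp hgim).mul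
      ((EuclideanSpace.proj (𝕜 := ℝ) i).continuous.measurable.comp hYm)).aestronglyMeasurable
  have hcoord : ∀ i : Fin d, ∫ ω, g ω i * Y ω i ∂μ = ∫ ω, g ω i * W ω i ∂μ := by
    intro i
    have hYii : Integrable (fun ω => Y ω i) μ :=
      (EuclideanSpace.proj (𝕜 := ℝ) i).integrable_comp hYi
    have hgi : StronglyMeasurable[m] (fun ω => g ω i) :=
      (EuclideanSpace.proj (𝕜 := ℝ) i).continuous.comp_stronglyMeasurable hgsm
    have h1 := integral_mul_condexp' hm μ (f := fun ω => g ω i) (g := fun ω => Y ω i)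
      hgi (hyInt i) hYii
    have hproj := condexp_clm_comm hm μ (EuclideanSpace.proj (𝕜 := ℝ) i)
      (f := fun ω => X₁ ω - X₀ ω) hYi
    refine h1.trans (integral_congr_ae ?_)
    filter_upwards [hproj] with ω hω
    have he : (fun ω => (EuclideanSpace.proj (𝕜 := ℝ) i) (X₁ ω - X₀ ω)) =
        fun ω => Y ω i := rfl
    rw [he] at hω
    rw [← hω]
    rfl
  have hsum : ∀ (h : Ω → EuclideanSpace ℝ (Fin d)),
      (∀ i : Fin d, Integrable (fun ω => g ω i * h ω i) μ) →
      ∫ ω, @inner ℝ _ _ (g ω) (h ω) ∂μ = ∑ i : Fin d, ∫ ω, g ω i * h ω i ∂μ := by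
    intro h hint
    rw [show (fun ω => @inner ℝ _ _ (g ω) (h ω)) =
        fun ω => ∑ i : Fin d, g ω i * h ω i from funext fun ω => by
      simp [PiLp.inner_apply, RCLike.inner_apply, conj_trivial, mul_comm]]
    exact integral_finset_sum _ fun i _ => hint i
  calc ∫ ω, @inner ℝ _ _ (g ω) (v t (X t ω)) ∂μ
      = ∑ i : Fin d, ∫ ω, g ω i * (v t (X t ω)) i ∂μ := hsum _ hvInt
    _ = ∑ i : Fin d, ∫ ω, g ω i * W ω i ∂μ := by
        refine Finset.sum_congr rfl fun i _ => integral_congr_ae ?_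
        filter_upwards [hvt] with ω hω
        rw [hω]
    _ = ∑ i : Fin d, ∫ ω, g ω i * Y ω i ∂μ :=
        Finset.sum_congr rfl fun i _ => (hcoord i).symm
    _ = ∫ ω, @inner ℝ _ _ (g ω) (Y ω) ∂μ := (hsum Y hyInt).symm
end
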